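/- Let q ≥ 2 be an integer, let m, n, k, w be integers with 0 ≤ k ≤ n ≤ m and (n−k)/2 < w ≤ n, and set ξ := w − (n−k)/2. Define, for an integer δ with 2ξ ≤ δ ≤ n − k, Ā_w := q^{m(k−n)} · ∏_{i=0}^{w−1} (q^m − q^i)(q^n − q^i)/(q^w − q^i) and P(δ) := (Σ_{i=⌈w − (n−k)/2 + δ/2⌉}^{min{δ, w}} [n−w, δ−i]_q · [w, i]_q · q^{(w−i)(δ−i)}) / [n, δ]_q. Then for every integer δ with 2ξ ≤ δ ≤ n − k, Ā_w · P(δ) ≤ 64 n · q^{−( m(n−k) − w(n+m) + w^2 + min{ 2ξ((n+k)/2 − ξ), w·k } )}. -/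

import Mathlib

noncomputable def gaussBinom (q : ℚ) (a b : ℤ) : ℚ :=
  if 0 ≤ b ∧ b ≤ a then
    ∏ i ∈ Finset.range b.toNat, (q ^ (a - i).toNat - 1) / (q ^ (b - i).toNat - 1)
  else 0

section helpers
variable {K : Type*} [Field K] [LinearOrder K] [IsStrictOrderedRing K]

/-- Weierstrass product inequality. -/
lemma wprod (f : ℕ → K) (h0 : ∀ j, 0 ≤ f j) (h1 : ∀ j, f j ≤ 1) (t : ℕ) :
    1 - ∑ j ∈ Finset.range t, f j ≤ ∏ j ∈ Finset.range t, (1 - f j) := by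
  induction t with
  | zero => simp
  | succ t ih =>
    rw [Finset.sum_range_succ, Finset.prod_range_succ]
    have hft : 0 ≤ 1 - f t := by linarith [h1 t]
    have h2 : (1 - ∑ j ∈ Finset.range t, f j) * (1 - f t) ≤
        (∏ j ∈ Finset.range t, (1 - f j)) * (1 - f t) :=
      mul_le_mul_of_nonneg_right ih hft
    have h3 : 0 ≤ (∑ j ∈ Finset.range t, f j) * f t := by
      exact mul_nonneg (Finset.sum_nonneg fun j _ => h0 j) (h0 t)
    nlinarith

lemma geo2 {q : K} (hq : 2 ≤ q) (t : ℕ) :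
    ∑ j ∈ Finset.range t, (q ^ (j + 1))⁻¹ ≤ 1 := by
  have hq0 : (0:K) < q := by linarith
  have key : ∀ t : ℕ, ∑ j ∈ Finset.range t, ((2:K) ^ (j + 1))⁻¹ ≤ 1 - ((2:K)^t)⁻¹ := by
    intro t
    induction t with
    | zero => simp
    | succ t ih =>
      rw [Finset.sum_range_succ]
      have h2 : ((2:K) ^ (t+1))⁻¹ = ((2:K)^t)⁻¹ / 2 := by
        rw [pow_succ]; field_simp
      rw [h2]
      have : (0:K) < (2:K)^t := by positivity
      have h3 : ((2:K)^(t+1)) = 2 * (2:K)^t := by ring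
      have h4 : ((2:K) ^ (t+1))⁻¹ = ((2:K)^t)⁻¹/2 := h2
      nlinarith [ih]
  refine le_trans (Finset.sum_le_sum fun j _ => ?_) (le_trans (key t) (sub_le_self _ (by positivity)))
  have h1 : (0:K) < (2:K) ^ (j+1) := by positivity
  have h2 : (2:K) ^ (j+1) ≤ q ^ (j+1) := pow_le_pow_left₀ (by norm_num) hq _
  exact inv_anti₀ h1 h2

lemma prod_one_sub_ge {q : K} (hq : 2 ≤ q) (b : ℕ) :
    (9/32 : K) ≤ ∏ j ∈ Finset.range b, (1 - (q ^ (j + 1))⁻¹) := by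
  have hq0 : (0:K) < q := by linarith
  have hinv : ∀ j : ℕ, (q ^ (j+1))⁻¹ ≤ ((2:K) ^ (j+1))⁻¹ := fun j =>
    inv_anti₀ (by positivity) (pow_le_pow_left₀ (by norm_num) hq _)
  have hnn : ∀ j : ℕ, (0:K) ≤ 1 - (q ^ (j+1))⁻¹ := by
    intro j
    have := hinv j
    have h2 : ((2:K) ^ (j+1))⁻¹ ≤ 1 := by
      rw [inv_le_one_iff₀]; right; exact one_le_pow₀ (by norm_num)
    linarith
  match b with
  | 0 => norm_num
  | 1 =>
    simp only [Finset.prod_range_one]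
    have := hinv 0
    norm_num at this ⊢
    linarith
  | (t + 2) =>
    rw [show t + 2 = 2 + t by ring, Finset.prod_range_add]
    have h1 : (3/8 : K) ≤ ∏ j ∈ Finset.range 2, (1 - (q ^ (j + 1))⁻¹) := by
      rw [Finset.prod_range_succ, Finset.prod_range_one]
      have i0 := hinv 0
      have i1 := hinv 1
      norm_num at i0 i1
      have n0 := hnn 0
      have n1 := hnn 1
      norm_num at n0 n1
      norm_num
      nlinarith [i0, i1, n0, n1]
    have h2 : (3/4 : K) ≤ ∏ j ∈ Finset.range t, (1 - (q ^ (2 + j + 1))⁻¹) := by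
      have hW := wprod (fun j => (q ^ (2 + j + 1))⁻¹) (fun j => by positivity)
        (fun j => by
          have := hinv (2 + j)
          have h2 : ((2:K) ^ (2 + j + 1))⁻¹ ≤ 1 := by
            rw [inv_le_one_iff₀]; right; exact one_le_pow₀ (by norm_num)
          linarith) t
      have hsum : ∑ j ∈ Finset.range t, (q ^ (2 + j + 1))⁻¹ ≤ 1/4 := by
        have : ∀ j ∈ Finset.range t, (q ^ (2 + j + 1))⁻¹ ≤ (1/4) * (q ^ (j+1))⁻¹ := by
          intro j _
          have he : q ^ (2 + j + 1) = q^2 * q^(j+1) := by ring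
          rw [he, mul_inv]
          have hq2 : (4:K) ≤ q^2 := by nlinarith
          have : (q^2)⁻¹ ≤ (4:K)⁻¹ := inv_anti₀ (by norm_num) hq2
          have hp : (0:K) ≤ (q^(j+1))⁻¹ := by positivity
          nlinarith
        calc ∑ j ∈ Finset.range t, (q ^ (2 + j + 1))⁻¹
            ≤ ∑ j ∈ Finset.range t, (1/4) * (q ^ (j+1))⁻¹ := Finset.sum_le_sum this
          _ = (1/4) * ∑ j ∈ Finset.range t, (q ^ (j+1))⁻¹ := by rw [Finset.mul_sum]
          _ ≤ (1/4) * 1 := by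
              have := geo2 hq t
              nlinarith [geo2 hq t]
          _ = 1/4 := by norm_num
      calc (3/4 : K) ≤ 1 - ∑ j ∈ Finset.range t, (q ^ (2 + j + 1))⁻¹ := by linarith
        _ ≤ _ := hW
    have hp2 : (0:K) ≤ ∏ j ∈ Finset.range 2, (1 - (q ^ (j + 1))⁻¹) := by linarith
    nlinarith

lemma prod_one_sub_ge' {q : K} (hq : 2 ≤ q) (b : ℕ) :
    (9/32 : K) ≤ ∏ i ∈ Finset.range b, (1 - (q ^ (b - i))⁻¹) := by
  have h := prod_one_sub_ge hq b
  rw [← Finset.prod_range_reflect (fun j => 1 - (q ^ (j + 1))⁻¹) b] at h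
  refine le_trans h (le_of_eq (Finset.prod_congr rfl fun i hi => ?_))
  rw [Finset.mem_range] at hi
  have he : b - 1 - i + 1 = b - i := by omega
  simp only [he]

/-- Lower bound `∏_{i<b} (q^{b-i} - 1) ≥ (9/32) q^{Σ (b-i)}`. -/
lemma prod_sub_one_ge {q : K} (hq : 2 ≤ q) (b : ℕ) :
    (9/32 : K) * q ^ (∑ i ∈ Finset.range b, (b - i)) ≤
      ∏ i ∈ Finset.range b, (q ^ (b - i) - 1) := by
  have hq0 : (0:K) < q := by linarith
  have key : ∏ i ∈ Finset.range b, (q ^ (b - i) - 1)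
      = (q ^ (∑ i ∈ Finset.range b, (b - i))) * ∏ i ∈ Finset.range b, (1 - (q ^ (b - i))⁻¹) := by
    rw [← Finset.prod_pow_eq_pow_sum, ← Finset.prod_mul_distrib]
    refine Finset.prod_congr rfl fun i _ => ?_
    have : (q : K) ^ (b - i) ≠ 0 := by positivity
    field_simp
  rw [key]
  have := prod_one_sub_ge' hq b
  have hp : (0:K) < q ^ (∑ i ∈ Finset.range b, (b - i)) := by positivity
  nlinarith

/-- Lower bound `∏_{i<b} (q^b - q^i) ≥ (9/32) q^{b²}`. -/
lemma prod_pow_sub_pow_ge {q : K} (hq : 2 ≤ q) (b : ℕ) :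
    (9/32 : K) * q ^ (b * b) ≤ ∏ i ∈ Finset.range b, (q ^ b - q ^ i) := by
  have hq0 : (0:K) < q := by linarith
  have key : ∏ i ∈ Finset.range b, (q ^ b - q ^ i)
      = (q ^ (b * b)) * ∏ i ∈ Finset.range b, (1 - (q ^ (b - i))⁻¹) := by
    have : (q:K) ^ (b*b) = ∏ _i ∈ Finset.range b, q ^ b := by
      rw [Finset.prod_const, Finset.card_range, ← pow_mul]
    rw [this, ← Finset.prod_mul_distrib]
    refine Finset.prod_congr rfl fun i hi => ?_
    rw [Finset.mem_range] at hi
    have h1 : (q : K) ^ (b - i) ≠ 0 := by positivity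
    have h2 : (q:K) ^ i * q ^ (b-i) = q ^ b := by
      rw [← pow_add]; congr 1; omega
    field_simp
    linear_combination -h2
  rw [key]
  have := prod_one_sub_ge' hq b
  have hp : (0:K) < q ^ (b*b) := by positivity
  nlinarith

lemma int_Icc_insert_right {a b : ℤ} (h : a ≤ b + 1) :
    insert (b + 1) (Finset.Icc a b) = Finset.Icc a (b + 1) := by
  ext x
  simp only [Finset.mem_insert, Finset.mem_Icc]
  omega

lemma geo4 (a b : ℤ) : ∑ i ∈ Finset.Icc a b, (4:K) ^ (-(i - a)) ≤ 4/3 := by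
  rcases le_or_gt a b with h | h
  · have key : ∀ c : ℤ, a ≤ c →
        ∑ i ∈ Finset.Icc a c, (4:K) ^ (-(i - a)) ≤ 4/3 - (1/3) * (4:K) ^ (-(c - a)) := by
      refine fun c hc => Int.le_induction (motive := fun c _ => ∑ i ∈ Finset.Icc a c, (4:K) ^ (-(i - a)) ≤ 4/3 - (1/3) * (4:K) ^ (-(c - a))) ?_ ?_ c hc
      · simp only [Finset.Icc_self, Finset.sum_singleton, sub_self, neg_zero, zpow_zero]
        norm_num
      · intro c hc ih
        rw [← int_Icc_insert_right (by omega), Finset.sum_insert (by simp)]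
        have he : (4:K) ^ (-(c + 1 - a)) = (4:K) ^ (-(c - a)) / 4 := by
          rw [show -(c+1-a) = -(c-a) + (-1) by ring, zpow_add₀ (by norm_num : (4:K) ≠ 0)]
          norm_num
          ring
        rw [he]
        have hp : (0:K) < (4:K) ^ (-(c - a)) := by positivity
        linarith
    have := key b h
    have hp : (0:K) < (4:K) ^ (-(b - a)) := by positivity
    linarith
  · rw [Finset.Icc_eq_empty (by omega)]
    norm_num

end helpers

section GB
variable {q : ℚ} (hq : 2 ≤ q)
include hq

lemma gb_pos {a b : ℤ} (hb : 0 ≤ b) (hba : b ≤ a) : 0 < gaussBinom q a b := by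
  rw [gaussBinom, if_pos ⟨hb, hba⟩]
  refine Finset.prod_pos fun i hi => ?_
  rw [Finset.mem_range] at hi
  have hB : 1 ≤ (b - (i:ℤ)).toNat := by omega
  have hA : (b - (i:ℤ)).toNat ≤ (a - (i:ℤ)).toNat := by omega
  have h1 : (1:ℚ) < q ^ (b - (i:ℤ)).toNat := by
    calc (1:ℚ) < 2 ^ (b - (i:ℤ)).toNat := one_lt_pow₀ (by norm_num) (by omega)
    _ ≤ q ^ _ := pow_le_pow_left₀ (by norm_num) hq _
  have h2 : (1:ℚ) < q ^ (a - (i:ℤ)).toNat := by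
    calc (1:ℚ) < 2 ^ (a - (i:ℤ)).toNat := one_lt_pow₀ (by norm_num) (by omega)
    _ ≤ q ^ _ := pow_le_pow_left₀ (by norm_num) hq _
  exact div_pos (by linarith) (by linarith)

lemma gb_nonneg (a b : ℤ) : 0 ≤ gaussBinom q a b := by
  by_cases h : 0 ≤ b ∧ b ≤ a
  · exact le_of_lt (gb_pos hq h.1 h.2)
  · rw [gaussBinom, if_neg h]

lemma gb_lower {a b : ℤ} (hb : 0 ≤ b) (hba : b ≤ a) :
    (q:ℚ) ^ (b.toNat * (a - b).toNat) ≤ gaussBinom q a b := by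
  rw [gaussBinom, if_pos ⟨hb, hba⟩]
  have hq0 : (0:ℚ) < q := by linarith
  have key : ∀ i ∈ Finset.range b.toNat,
      (q:ℚ) ^ (a - b).toNat ≤ (q ^ (a - (i:ℤ)).toNat - 1) / (q ^ (b - (i:ℤ)).toNat - 1) := by
    intro i hi
    rw [Finset.mem_range] at hi
    have hB : 1 ≤ (b - (i:ℤ)).toNat := by omega
    have hAe : (a - (i:ℤ)).toNat = (a-b).toNat + (b - (i:ℤ)).toNat := by omega
    have h1 : (1:ℚ) ≤ q ^ (b - (i:ℤ)).toNat := one_le_pow₀ (by linarith)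
    have h1' : (1:ℚ) < q ^ (b - (i:ℤ)).toNat := by
      calc (1:ℚ) < 2 ^ (b - (i:ℤ)).toNat := one_lt_pow₀ (by norm_num) (by omega)
      _ ≤ q ^ _ := pow_le_pow_left₀ (by norm_num) hq _
    have hd : (1:ℚ) ≤ q ^ (a-b).toNat := one_le_pow₀ (by linarith)
    rw [le_div_iff₀ (by linarith)]
    rw [hAe, pow_add]
    nlinarith
  calc (q:ℚ) ^ (b.toNat * (a-b).toNat) = ∏ _i ∈ Finset.range b.toNat, q ^ (a-b).toNat := by
        rw [Finset.prod_const, Finset.card_range, ← pow_mul, mul_comm]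
    _ ≤ _ := Finset.prod_le_prod (fun i _ => by positivity) key

lemma gb_upper (a b : ℤ) :
    gaussBinom q a b ≤ (32/9 : ℚ) * q ^ (b.toNat * (a - b).toNat) := by
  have hq0 : (0:ℚ) < q := by linarith
  by_cases h : 0 ≤ b ∧ b ≤ a
  · rw [gaussBinom, if_pos h]
    obtain ⟨hb, hba⟩ := h
    rw [Finset.prod_div_distrib]
    set β := b.toNat with hβ
    have hBe : ∀ i ∈ Finset.range β, (b - (i:ℤ)).toNat = β - i := by
      intro i hi; rw [Finset.mem_range] at hi; omega
    have hden : (9/32 : ℚ) * q ^ (∑ i ∈ Finset.range β, (β - i)) ≤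
        ∏ i ∈ Finset.range β, (q ^ (b - (i:ℤ)).toNat - 1) := by
      calc (9/32 : ℚ) * q ^ (∑ i ∈ Finset.range β, (β - i))
          ≤ ∏ i ∈ Finset.range β, (q ^ (β - i) - 1) := prod_sub_one_ge hq β
        _ = _ := Finset.prod_congr rfl fun i hi => by rw [hBe i hi]
    have hnum : ∏ i ∈ Finset.range β, (q ^ (a - (i:ℤ)).toNat - 1)
        ≤ q ^ (β * (a-b).toNat + ∑ i ∈ Finset.range β, (β - i)) := by
      have : ∀ i ∈ Finset.range β, (q:ℚ) ^ (a - (i:ℤ)).toNat - 1 ≤ q ^ ((a-b).toNat + (β - i)) := by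
        intro i hi
        rw [Finset.mem_range] at hi
        have hAe : (a - (i:ℤ)).toNat = (a-b).toNat + (β - i) := by omega
        rw [hAe]
        linarith [pow_pos hq0 ((a-b).toNat + (β - i))]
      calc ∏ i ∈ Finset.range β, (q ^ (a - (i:ℤ)).toNat - 1)
          ≤ ∏ i ∈ Finset.range β, q ^ ((a-b).toNat + (β - i)) := by
            refine Finset.prod_le_prod (fun i hi => ?_) this
            rw [Finset.mem_range] at hi
            have : (1:ℚ) ≤ q ^ (a - (i:ℤ)).toNat := one_le_pow₀ (by linarith)
            linarith
        _ = q ^ (∑ i ∈ Finset.range β, ((a-b).toNat + (β - i))) := by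
            rw [← Finset.prod_pow_eq_pow_sum]
        _ = q ^ (β * (a-b).toNat + ∑ i ∈ Finset.range β, (β - i)) := by
            congr 1
            rw [Finset.sum_add_distrib, Finset.sum_const, Finset.card_range, smul_eq_mul]
      
    have hdpos : (0:ℚ) < ∏ i ∈ Finset.range β, (q ^ (b - (i:ℤ)).toNat - 1) := by
      have : (0:ℚ) < (9/32 : ℚ) * q ^ (∑ i ∈ Finset.range β, (β - i)) := by positivity
      linarith
    calc (∏ i ∈ Finset.range β, (q ^ (a - (i:ℤ)).toNat - 1)) /
          (∏ i ∈ Finset.range β, (q ^ (b - (i:ℤ)).toNat - 1))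
        ≤ q ^ (β * (a-b).toNat + ∑ i ∈ Finset.range β, (β - i)) /
            ((9/32 : ℚ) * q ^ (∑ i ∈ Finset.range β, (β - i))) := by
          apply div_le_div₀ (by positivity) hnum (by positivity) hden
      _ = (32/9 : ℚ) * q ^ (β * (a-b).toNat) := by
          rw [pow_add]
          have h1 : (q:ℚ) ^ (∑ i ∈ Finset.range β, (β - i)) ≠ 0 := by positivity
          field_simp
      _ = (32/9 : ℚ) * q ^ (b.toNat * (a-b).toNat) := by rw [hβ]
  · rw [gaussBinom, if_neg h]
    positivity

end GB


set_option maxHeartbeats 3200000 in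
/-- With `ξ := w − (n−k)/2`,
`Ā_w = q^{m(k−n)} ∏_{i=0}^{w−1} (q^m − q^i)(q^n − q^i)/(q^w − q^i)` and
`P(δ) = (Σ_{i=⌈w−(n−k)/2+δ/2⌉}^{min{δ,w}} [n−w, δ−i]_q [w, i]_q q^{(w−i)(δ−i)}) / [n, δ]_q`,
for every integer `δ` with `2ξ ≤ δ ≤ n − k` one has
`Ā_w · P(δ) ≤ 64 n q^{−(m(n−k) − w(n+m) + w² + min{2ξ((n+k)/2 − ξ), wk})}`. -/
theorem stmt12 (q m n k w : ℕ) (hq : 2 ≤ q)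
    (hk : k ≤ n) (hn : n ≤ m) (hw1 : ((n : ℚ) - k) / 2 < w) (hw2 : w ≤ n) :
    ∀ δ : ℕ, 2 * w + k ≤ δ + n → δ + k ≤ n →
    ((q : ℝ) ^ ((m : ℤ) * ((k : ℤ) - n)) * ∏ i ∈ Finset.range w,
        ((q : ℝ) ^ m - (q : ℝ) ^ i) * ((q : ℝ) ^ n - (q : ℝ) ^ i)
          / ((q : ℝ) ^ w - (q : ℝ) ^ i))
      * ((∑ i ∈ Finset.Icc (⌈(w : ℚ) - ((n : ℚ) - k) / 2 + (δ : ℚ) / 2⌉) ((min δ w : ℕ) : ℤ),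
            ((gaussBinom q ((n : ℤ) - w) ((δ : ℤ) - i) : ℚ) : ℝ)
              * ((gaussBinom q w i : ℚ) : ℝ) * (q : ℝ) ^ (((w : ℤ) - i) * ((δ : ℤ) - i)))
          / ((gaussBinom q n δ : ℚ) : ℝ))
      ≤ 64 * n * (q : ℝ) ^ (-((m : ℝ) * ((n : ℝ) - k) - w * ((n : ℝ) + m) + (w : ℝ) ^ 2
          + min (2 * ((w : ℝ) - ((n : ℝ) - k) / 2)
              * (((n : ℝ) + k) / 2 - ((w : ℝ) - ((n : ℝ) - k) / 2)))
            ((w : ℝ) * k))) := by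
  intro δ hd1 hd2
  have hqQ : (2:ℚ) ≤ (q:ℚ) := by exact_mod_cast hq
  have hQ : (2:ℝ) ≤ (q:ℝ) := by exact_mod_cast hq
  have hQ0 : (0:ℝ) < (q:ℝ) := by linarith
  have hQ1 : (1:ℝ) ≤ (q:ℝ) := by linarith
  have hw0 : 1 ≤ w := by
    rcases Nat.eq_zero_or_pos w with h | h
    · exfalso
      have h1 : (0:ℚ) ≤ ((n:ℚ) - k)/2 := by
        have : (k:ℚ) ≤ n := by exact_mod_cast hk
        linarith
      rw [h] at hw1
      norm_num at hw1
      linarith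
    · exact h
  have hn0 : 1 ≤ n := le_trans hw0 hw2
  set i0 : ℤ := ⌈(w : ℚ) - ((n : ℚ) - k) / 2 + (δ : ℚ) / 2⌉ with hi0def
  have hi0ge : (w : ℚ) - ((n : ℚ) - k) / 2 + (δ : ℚ) / 2 ≤ (i0:ℚ) := Int.le_ceil _
  have hi0pos : 0 < i0 := by
    rw [hi0def]
    rw [Int.lt_ceil]
    push_cast
    have hd0 : (0:ℚ) ≤ (δ:ℚ) := by positivity
    linarith
  have h2i0 : 2*(w:ℤ) + k + δ ≤ (n:ℤ) + 2*i0 := by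
    have : 2*(w:ℚ) + k + δ ≤ (n:ℚ) + 2*(i0:ℚ) := by linarith
    exact_mod_cast this
  -- abbreviations
  set g : ℤ → ℤ := fun i => i * ((n:ℤ) - δ - w + i) with hgdef
  set eA : ℤ := (m:ℤ)*((k:ℤ) - n) + ((m:ℤ)+n)*w - w*w with heAdef
  -- Part A
  have hAbar : ((q : ℝ) ^ ((m : ℤ) * ((k : ℤ) - n)) * ∏ i ∈ Finset.range w,
        ((q : ℝ) ^ m - (q : ℝ) ^ i) * ((q : ℝ) ^ n - (q : ℝ) ^ i)
          / ((q : ℝ) ^ w - (q : ℝ) ^ i)) ≤ (32/9) * (q:ℝ) ^ eA := by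
    have hden := prod_pow_sub_pow_ge hQ w
    have hdenpos : (0:ℝ) < ∏ i ∈ Finset.range w, ((q:ℝ) ^ w - (q:ℝ) ^ i) :=
      lt_of_lt_of_le (by positivity) hden
    have hfac : ∀ i ∈ Finset.range w,
        (0:ℝ) ≤ ((q:ℝ) ^ m - (q:ℝ) ^ i) * ((q:ℝ) ^ n - (q:ℝ) ^ i) ∧
        ((q:ℝ) ^ m - (q:ℝ) ^ i) * ((q:ℝ) ^ n - (q:ℝ) ^ i) ≤ (q:ℝ) ^ m * (q:ℝ) ^ n := by
      intro i hi
      rw [Finset.mem_range] at hi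
      have h1 : (q:ℝ) ^ i ≤ (q:ℝ) ^ m := pow_le_pow_right₀ hQ1 (by omega)
      have h2 : (q:ℝ) ^ i ≤ (q:ℝ) ^ n := pow_le_pow_right₀ hQ1 (by omega)
      have h3 : (0:ℝ) < (q:ℝ) ^ i := by positivity
      constructor
      · nlinarith
      · nlinarith
    have hnum : ∏ i ∈ Finset.range w, (((q:ℝ) ^ m - (q:ℝ) ^ i) * ((q:ℝ) ^ n - (q:ℝ) ^ i))
        ≤ (q:ℝ) ^ ((m+n)*w) := by
      calc ∏ i ∈ Finset.range w, (((q:ℝ) ^ m - (q:ℝ) ^ i) * ((q:ℝ) ^ n - (q:ℝ) ^ i))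
          ≤ ∏ _i ∈ Finset.range w, ((q:ℝ) ^ m * (q:ℝ) ^ n) :=
            Finset.prod_le_prod (fun i hi => (hfac i hi).1) (fun i hi => (hfac i hi).2)
        _ = (q:ℝ) ^ ((m+n)*w) := by
            rw [Finset.prod_const, Finset.card_range, ← pow_add, ← pow_mul]
    have hprodq : ∏ i ∈ Finset.range w,
        (((q:ℝ) ^ m - (q:ℝ) ^ i) * ((q:ℝ) ^ n - (q:ℝ) ^ i) / ((q:ℝ) ^ w - (q:ℝ) ^ i))
        = (∏ i ∈ Finset.range w, (((q:ℝ) ^ m - (q:ℝ) ^ i) * ((q:ℝ) ^ n - (q:ℝ) ^ i)))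
          / ∏ i ∈ Finset.range w, ((q:ℝ) ^ w - (q:ℝ) ^ i) := Finset.prod_div_distrib _ _
    have hu : w*w ≤ (m+n)*w := Nat.mul_le_mul_right w (by omega)
    have hprodle : ∏ i ∈ Finset.range w,
        (((q:ℝ) ^ m - (q:ℝ) ^ i) * ((q:ℝ) ^ n - (q:ℝ) ^ i) / ((q:ℝ) ^ w - (q:ℝ) ^ i))
        ≤ (32/9) * (q:ℝ) ^ ((m+n)*w - w*w) := by
      rw [hprodq]
      have hsplit : (q:ℝ) ^ ((m+n)*w) = (q:ℝ) ^ ((m+n)*w - w*w) * (q:ℝ) ^ (w*w) := by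
        rw [← pow_add]
        congr 1
        omega
      calc (∏ i ∈ Finset.range w, (((q:ℝ) ^ m - (q:ℝ) ^ i) * ((q:ℝ) ^ n - (q:ℝ) ^ i)))
          / ∏ i ∈ Finset.range w, ((q:ℝ) ^ w - (q:ℝ) ^ i)
          ≤ (q:ℝ) ^ ((m+n)*w) / ((9/32) * (q:ℝ) ^ (w*w)) :=
            div_le_div₀ (by positivity) hnum (by positivity) hden
        _ = (32/9) * (q:ℝ) ^ ((m+n)*w - w*w) := by
            rw [hsplit]
            have : ((q:ℝ) ^ (w*w)) ≠ 0 := by positivity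
            field_simp
    have hzp : (0:ℝ) < (q:ℝ) ^ ((m:ℤ) * ((k:ℤ) - n)) := by positivity
    calc (q : ℝ) ^ ((m : ℤ) * ((k : ℤ) - n)) * ∏ i ∈ Finset.range w,
        ((q : ℝ) ^ m - (q : ℝ) ^ i) * ((q : ℝ) ^ n - (q : ℝ) ^ i)
          / ((q : ℝ) ^ w - (q : ℝ) ^ i)
        ≤ (q : ℝ) ^ ((m : ℤ) * ((k : ℤ) - n)) * ((32/9) * (q:ℝ) ^ ((m+n)*w - w*w)) :=
          mul_le_mul_of_nonneg_left hprodle (le_of_lt hzp)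
      _ = (32/9) * (q:ℝ) ^ eA := by
          rw [heAdef, show (m:ℤ)*((k:ℤ) - n) + ((m:ℤ)+n)*w - w*w
              = (m:ℤ)*((k:ℤ) - n) + (((m+n)*w - w*w : ℕ) : ℤ) by push_cast [hu]; ring,
            zpow_add₀ (ne_of_gt hQ0), zpow_natCast]
          ring
  have hAbar0 : (0:ℝ) ≤ ((q : ℝ) ^ ((m : ℤ) * ((k : ℤ) - n)) * ∏ i ∈ Finset.range w,
        ((q : ℝ) ^ m - (q : ℝ) ^ i) * ((q : ℝ) ^ n - (q : ℝ) ^ i)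
          / ((q : ℝ) ^ w - (q : ℝ) ^ i)) := by
    refine mul_nonneg (by positivity) (Finset.prod_nonneg fun i hi => ?_)
    rw [Finset.mem_range] at hi
    have h1 : (q:ℝ) ^ i ≤ (q:ℝ) ^ m := pow_le_pow_right₀ hQ1 (by omega)
    have h2 : (q:ℝ) ^ i ≤ (q:ℝ) ^ n := pow_le_pow_right₀ hQ1 (by omega)
    have h3 : (q:ℝ) ^ i ≤ (q:ℝ) ^ w := pow_le_pow_right₀ hQ1 (by omega)
    have h4 : (0:ℝ) < (q:ℝ) ^ i := by positivity
    apply div_nonneg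
    · nlinarith
    · linarith
  -- Part B
  have hSD : ((∑ i ∈ Finset.Icc i0 ((min δ w : ℕ) : ℤ),
            ((gaussBinom q ((n : ℤ) - w) ((δ : ℤ) - i) : ℚ) : ℝ)
              * ((gaussBinom q w i : ℚ) : ℝ) * (q : ℝ) ^ (((w : ℤ) - i) * ((δ : ℤ) - i)))
          / ((gaussBinom q n δ : ℚ) : ℝ)) ≤ (32/9)^2 * (4/3) * (q:ℝ) ^ (-(g i0)) := by
    -- denominator bound
    have hDpos : (0:ℝ) < ((gaussBinom q n δ : ℚ) : ℝ) := by
      exact_mod_cast gb_pos hqQ (by positivity) (by exact_mod_cast (show δ ≤ n by omega))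
    have hDge : (q:ℝ) ^ ((δ:ℤ) * ((n:ℤ) - δ)) ≤ ((gaussBinom q n δ : ℚ) : ℝ) := by
      have h := gb_lower hqQ (a := (n:ℤ)) (b := (δ:ℤ)) (by positivity)
        (by exact_mod_cast (show δ ≤ n by omega))
      have hR : ((q:ℚ) ^ ((δ:ℤ).toNat * ((n:ℤ) - (δ:ℤ)).toNat) : ℝ)
          ≤ ((gaussBinom q n δ : ℚ) : ℝ) := by exact_mod_cast h
      have e1 : (((δ:ℤ).toNat : ℤ)) = (δ:ℤ) := Int.toNat_of_nonneg (by positivity)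
      have e2 : ((((n:ℤ) - (δ:ℤ)).toNat : ℤ)) = (n:ℤ) - δ := Int.toNat_of_nonneg (by omega)
      calc (q:ℝ) ^ ((δ:ℤ) * ((n:ℤ) - δ)) = (q:ℝ) ^ (((δ:ℤ).toNat * ((n:ℤ) - (δ:ℤ)).toNat : ℕ) : ℤ) := by
            congr 1
            push_cast [e1, e2]
            ring
        _ = (q:ℝ) ^ ((δ:ℤ).toNat * ((n:ℤ) - (δ:ℤ)).toNat : ℕ) := zpow_natCast _ _
        _ ≤ _ := by push_cast at hR ⊢; exact hR
    -- gap bound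
    have hgap : ∀ i : ℤ, i ∈ Finset.Icc i0 ((min δ w : ℕ) : ℤ) →
        g i0 + 2*(i - i0) ≤ g i := by
      intro i hi
      rw [Finset.mem_Icc] at hi
      rcases eq_or_lt_of_le hi.1 with he | hlt
      · rw [← he]
        simp
      · have hj : 1 ≤ i - i0 := by omega
        have hA : (w:ℤ) + k ≤ (n:ℤ) - δ - w + 2*i0 := by omega
        have hw1' : (1:ℤ) ≤ (w:ℤ) := by exact_mod_cast hw0
        simp only [hgdef]
        have hid : i*((n:ℤ) - δ - w + i) - i0*((n:ℤ) - δ - w + i0) - 2*(i - i0)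
            = (i - i0)*(((n:ℤ) - δ - w) + 2*i0 - 1) + (i - i0)*(i - i0 - 1) := by ring
        have t1 : (0:ℤ) ≤ (i - i0)*(((n:ℤ) - δ - w) + 2*i0 - 1) :=
          mul_nonneg (by omega) (by omega)
        have t2 : (0:ℤ) ≤ (i - i0)*(i - i0 - 1) := mul_nonneg (by omega) (by omega)
        linarith [hid, t1, t2]
    -- per-term bound
    have hterm : ∀ i : ℤ, i ∈ Finset.Icc i0 ((min δ w : ℕ) : ℤ) →
        ((gaussBinom q ((n : ℤ) - w) ((δ : ℤ) - i) : ℚ) : ℝ)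
              * ((gaussBinom q w i : ℚ) : ℝ) * (q : ℝ) ^ (((w : ℤ) - i) * ((δ : ℤ) - i))
        ≤ (32/9)^2 * (q:ℝ) ^ ((δ:ℤ) * ((n:ℤ) - δ) - g i) := by
      intro i hi
      rw [Finset.mem_Icc] at hi
      have hi1 : 0 ≤ i := by omega
      have hi2 : i ≤ (δ:ℤ) := by
        refine le_trans hi.2 ?_
        have : min δ w ≤ δ := min_le_left _ _
        exact_mod_cast this
      have hi3 : i ≤ (w:ℤ) := by
        refine le_trans hi.2 ?_
        have : min δ w ≤ w := min_le_right _ _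
        exact_mod_cast this
      by_cases hc : (δ:ℤ) - i ≤ (n:ℤ) - w
      · have b1 := gb_upper hqQ ((n:ℤ) - w) ((δ:ℤ) - i)
        have b2 := gb_upper hqQ (w:ℤ) i
        have nn1 := gb_nonneg hqQ ((n:ℤ) - w) ((δ:ℤ) - i)
        have nn2 := gb_nonneg hqQ (w:ℤ) i
        set E1 : ℕ := ((δ:ℤ) - i).toNat * (((n:ℤ) - w) - ((δ:ℤ) - i)).toNat with hE1
        set E2 : ℕ := i.toNat * ((w:ℤ) - i).toNat with hE2
        have b1R : ((gaussBinom q ((n : ℤ) - w) ((δ : ℤ) - i) : ℚ) : ℝ)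
            ≤ (32/9) * (q:ℝ) ^ E1 := by
          have := (Rat.cast_le (K := ℝ)).2 b1
          push_cast at this
          convert this using 2
        have b2R : ((gaussBinom q w i : ℚ) : ℝ) ≤ (32/9) * (q:ℝ) ^ E2 := by
          have := (Rat.cast_le (K := ℝ)).2 b2
          push_cast at this
          convert this using 2
        have nn1R : (0:ℝ) ≤ ((gaussBinom q ((n : ℤ) - w) ((δ : ℤ) - i) : ℚ) : ℝ) := by
          exact_mod_cast nn1
        have nn2R : (0:ℝ) ≤ ((gaussBinom q w i : ℚ) : ℝ) := by exact_mod_cast nn2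
        have hzp : (0:ℝ) < (q : ℝ) ^ (((w : ℤ) - i) * ((δ : ℤ) - i)) := by positivity
        have hmul : ((gaussBinom q ((n : ℤ) - w) ((δ : ℤ) - i) : ℚ) : ℝ)
              * ((gaussBinom q w i : ℚ) : ℝ) * (q : ℝ) ^ (((w : ℤ) - i) * ((δ : ℤ) - i))
            ≤ ((32/9) * (q:ℝ) ^ E1) * ((32/9) * (q:ℝ) ^ E2)
                * (q : ℝ) ^ (((w : ℤ) - i) * ((δ : ℤ) - i)) := by
          have h1 : ((gaussBinom q ((n : ℤ) - w) ((δ : ℤ) - i) : ℚ) : ℝ)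
              * ((gaussBinom q w i : ℚ) : ℝ) ≤ ((32/9) * (q:ℝ) ^ E1) * ((32/9) * (q:ℝ) ^ E2) :=
            mul_le_mul b1R b2R nn2R (by positivity)
          exact mul_le_mul_of_nonneg_right h1 (le_of_lt hzp)
        refine le_trans hmul (le_of_eq ?_)
        have hEe : ((E1:ℤ) + E2) + ((w:ℤ) - i) * ((δ:ℤ) - i) = (δ:ℤ) * ((n:ℤ) - δ) - g i := by
          rw [hE1, hE2, hgdef]
          push_cast [Int.toNat_of_nonneg (show (0:ℤ) ≤ (δ:ℤ) - i by omega),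
            Int.toNat_of_nonneg (show (0:ℤ) ≤ ((n:ℤ) - w) - ((δ:ℤ) - i) by omega),
            Int.toNat_of_nonneg hi1,
            Int.toNat_of_nonneg (show (0:ℤ) ≤ (w:ℤ) - i by omega)]
          ring
        calc ((32/9) * (q:ℝ) ^ E1) * ((32/9) * (q:ℝ) ^ E2)
                * (q : ℝ) ^ (((w : ℤ) - i) * ((δ : ℤ) - i))
            = (32/9)^2 * ((q:ℝ) ^ ((E1:ℤ)) * (q:ℝ) ^ ((E2:ℤ))
                * (q : ℝ) ^ (((w : ℤ) - i) * ((δ : ℤ) - i))) := by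
              rw [zpow_natCast, zpow_natCast]; ring
          _ = (32/9)^2 * (q:ℝ) ^ ((δ:ℤ) * ((n:ℤ) - δ) - g i) := by
              rw [← zpow_add₀ (ne_of_gt hQ0), ← zpow_add₀ (ne_of_gt hQ0), hEe]
      · have hz : gaussBinom q ((n:ℤ) - w) ((δ:ℤ) - i) = 0 := by
          rw [gaussBinom, if_neg]
          intro hcon
          exact hc hcon.2
        rw [hz]
        push_cast
        rw [zero_mul, zero_mul]
        positivity
    -- combine per-term with decay
    have hterm2 : ∀ i : ℤ, i ∈ Finset.Icc i0 ((min δ w : ℕ) : ℤ) →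
        ((gaussBinom q ((n : ℤ) - w) ((δ : ℤ) - i) : ℚ) : ℝ)
              * ((gaussBinom q w i : ℚ) : ℝ) * (q : ℝ) ^ (((w : ℤ) - i) * ((δ : ℤ) - i))
        ≤ (32/9)^2 * (q:ℝ) ^ ((δ:ℤ) * ((n:ℤ) - δ) - g i0) * (4:ℝ) ^ (-(i - i0)) := by
      intro i hi
      refine le_trans (hterm i hi) ?_
      have h1 : (q:ℝ) ^ ((δ:ℤ) * ((n:ℤ) - δ) - g i)
          ≤ (q:ℝ) ^ ((δ:ℤ) * ((n:ℤ) - δ) - g i0 - 2*(i - i0)) := by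
        apply zpow_le_zpow_right₀ hQ1
        have := hgap i hi
        linarith
      have h2 : (q:ℝ) ^ ((δ:ℤ) * ((n:ℤ) - δ) - g i0 - 2*(i - i0))
          = (q:ℝ) ^ ((δ:ℤ) * ((n:ℤ) - δ) - g i0) * (q:ℝ) ^ (-(2*(i - i0))) := by
        rw [show (δ:ℤ) * ((n:ℤ) - δ) - g i0 - 2*(i - i0)
            = ((δ:ℤ) * ((n:ℤ) - δ) - g i0) + (-(2*(i - i0))) by ring,
          zpow_add₀ (ne_of_gt hQ0)]
      have h3 : (q:ℝ) ^ (-(2*(i - i0))) ≤ (4:ℝ) ^ (-(i - i0)) := by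
        rw [Finset.mem_Icc] at hi
        obtain ⟨t, ht⟩ := Int.eq_ofNat_of_zero_le (show (0:ℤ) ≤ i - i0 by omega)
        rw [ht, zpow_neg, zpow_neg]
        apply inv_anti₀ (by positivity)
        have e4 : (4:ℝ) ^ ((t:ℤ)) = (4:ℝ) ^ t := zpow_natCast _ _
        have eq2 : (q:ℝ) ^ (2*(t:ℤ)) = ((q:ℝ)^2) ^ t := by
          rw [show 2*(t:ℤ) = ((2*t : ℕ) : ℤ) by push_cast; ring, zpow_natCast, pow_mul]
        rw [e4, eq2]
        exact pow_le_pow_left₀ (by norm_num) (by nlinarith) t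
      calc (32/9)^2 * (q:ℝ) ^ ((δ:ℤ) * ((n:ℤ) - δ) - g i)
          ≤ (32/9)^2 * ((q:ℝ) ^ ((δ:ℤ) * ((n:ℤ) - δ) - g i0) * (q:ℝ) ^ (-(2*(i - i0)))) := by
            rw [← h2]
            exact mul_le_mul_of_nonneg_left h1 (by positivity)
        _ ≤ _ := by
            rw [mul_comm ((q:ℝ) ^ ((δ:ℤ) * ((n:ℤ) - δ) - g i0)) ((q:ℝ) ^ (-(2*(i - i0)))),
              ← mul_assoc, mul_comm ((32/9:ℝ)^2) ((q:ℝ) ^ (-(2*(i - i0))))]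
            rw [mul_assoc, mul_comm ((32/9:ℝ)^2 * (q:ℝ) ^ ((δ:ℤ) * ((n:ℤ) - δ) - g i0)) ((4:ℝ) ^ (-(i - i0)))]
            exact mul_le_mul_of_nonneg_right h3 (by positivity)
    -- sum bound
    have hsum : (∑ i ∈ Finset.Icc i0 ((min δ w : ℕ) : ℤ),
            ((gaussBinom q ((n : ℤ) - w) ((δ : ℤ) - i) : ℚ) : ℝ)
              * ((gaussBinom q w i : ℚ) : ℝ) * (q : ℝ) ^ (((w : ℤ) - i) * ((δ : ℤ) - i)))
        ≤ (32/9)^2 * (4/3) * (q:ℝ) ^ ((δ:ℤ) * ((n:ℤ) - δ) - g i0) := by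
      calc _ ≤ ∑ i ∈ Finset.Icc i0 ((min δ w : ℕ) : ℤ),
            (32/9)^2 * (q:ℝ) ^ ((δ:ℤ) * ((n:ℤ) - δ) - g i0) * (4:ℝ) ^ (-(i - i0)) :=
            Finset.sum_le_sum hterm2
        _ = (32/9)^2 * (q:ℝ) ^ ((δ:ℤ) * ((n:ℤ) - δ) - g i0)
            * ∑ i ∈ Finset.Icc i0 ((min δ w : ℕ) : ℤ), (4:ℝ) ^ (-(i - i0)) := by
            rw [Finset.mul_sum]
        _ ≤ (32/9)^2 * (q:ℝ) ^ ((δ:ℤ) * ((n:ℤ) - δ) - g i0) * (4/3) := by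
            have hgeo := geo4 (K := ℝ) i0 ((min δ w : ℕ) : ℤ)
            have hp : (0:ℝ) ≤ (32/9)^2 * (q:ℝ) ^ ((δ:ℤ) * ((n:ℤ) - δ) - g i0) := by positivity
            exact mul_le_mul_of_nonneg_left hgeo hp
        _ = (32/9)^2 * (4/3) * (q:ℝ) ^ ((δ:ℤ) * ((n:ℤ) - δ) - g i0) := by ring
    -- divide
    have hSnn : (0:ℝ) ≤ ∑ i ∈ Finset.Icc i0 ((min δ w : ℕ) : ℤ),
            ((gaussBinom q ((n : ℤ) - w) ((δ : ℤ) - i) : ℚ) : ℝ)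
              * ((gaussBinom q w i : ℚ) : ℝ) * (q : ℝ) ^ (((w : ℤ) - i) * ((δ : ℤ) - i)) := by
      refine Finset.sum_nonneg fun i _ => ?_
      have nn1R : (0:ℝ) ≤ ((gaussBinom q ((n : ℤ) - w) ((δ : ℤ) - i) : ℚ) : ℝ) := by
        exact_mod_cast gb_nonneg hqQ _ _
      have nn2R : (0:ℝ) ≤ ((gaussBinom q w i : ℚ) : ℝ) := by exact_mod_cast gb_nonneg hqQ _ _
      positivity
    calc (∑ i ∈ Finset.Icc i0 ((min δ w : ℕ) : ℤ),
            ((gaussBinom q ((n : ℤ) - w) ((δ : ℤ) - i) : ℚ) : ℝ)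
              * ((gaussBinom q w i : ℚ) : ℝ) * (q : ℝ) ^ (((w : ℤ) - i) * ((δ : ℤ) - i)))
          / ((gaussBinom q n δ : ℚ) : ℝ)
        ≤ ((32/9)^2 * (4/3) * (q:ℝ) ^ ((δ:ℤ) * ((n:ℤ) - δ) - g i0))
            / ((q:ℝ) ^ ((δ:ℤ) * ((n:ℤ) - δ))) :=
          div_le_div₀ (by positivity) hsum (by positivity) hDge
      _ = (32/9)^2 * (4/3) * (q:ℝ) ^ (-(g i0)) := by
          rw [show ((δ:ℤ) * ((n:ℤ) - δ) - g i0) = (δ:ℤ) * ((n:ℤ) - δ) + (-(g i0)) by ring,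
            zpow_add₀ (ne_of_gt hQ0)]
          have : ((q:ℝ) ^ ((δ:ℤ) * ((n:ℤ) - δ))) ≠ 0 := by positivity
          field_simp
  have hSD0 : (0:ℝ) ≤ ((∑ i ∈ Finset.Icc i0 ((min δ w : ℕ) : ℤ),
            ((gaussBinom q ((n : ℤ) - w) ((δ : ℤ) - i) : ℚ) : ℝ)
              * ((gaussBinom q w i : ℚ) : ℝ) * (q : ℝ) ^ (((w : ℤ) - i) * ((δ : ℤ) - i)))
          / ((gaussBinom q n δ : ℚ) : ℝ)) := by
    have hDpos : (0:ℝ) < ((gaussBinom q n δ : ℚ) : ℝ) := by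
      exact_mod_cast gb_pos hqQ (by positivity) (by exact_mod_cast (show δ ≤ n by omega))
    refine div_nonneg (Finset.sum_nonneg fun i _ => ?_) (le_of_lt hDpos)
    have nn1R : (0:ℝ) ≤ ((gaussBinom q ((n : ℤ) - w) ((δ : ℤ) - i) : ℚ) : ℝ) := by
      exact_mod_cast gb_nonneg hqQ _ _
    have nn2R : (0:ℝ) ≤ ((gaussBinom q w i : ℚ) : ℝ) := by exact_mod_cast gb_nonneg hqQ _ _
    positivity
  -- combine
  have hcomb : ((q : ℝ) ^ ((m : ℤ) * ((k : ℤ) - n)) * ∏ i ∈ Finset.range w,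
        ((q : ℝ) ^ m - (q : ℝ) ^ i) * ((q : ℝ) ^ n - (q : ℝ) ^ i)
          / ((q : ℝ) ^ w - (q : ℝ) ^ i))
      * ((∑ i ∈ Finset.Icc i0 ((min δ w : ℕ) : ℤ),
            ((gaussBinom q ((n : ℤ) - w) ((δ : ℤ) - i) : ℚ) : ℝ)
              * ((gaussBinom q w i : ℚ) : ℝ) * (q : ℝ) ^ (((w : ℤ) - i) * ((δ : ℤ) - i)))
          / ((gaussBinom q n δ : ℚ) : ℝ))
      ≤ (131072/2187) * (q:ℝ) ^ (eA - g i0) := by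
    have h := mul_le_mul hAbar hSD hSD0 (by positivity)
    calc _ ≤ (32/9) * (q:ℝ) ^ eA * ((32/9)^2 * (4/3) * (q:ℝ) ^ (-(g i0))) := h
      _ = (131072/2187) * (q:ℝ) ^ (eA - g i0) := by
          rw [show eA - g i0 = eA + (-(g i0)) by ring, zpow_add₀ (ne_of_gt hQ0)]
          ring
  refine le_trans hcomb ?_
  -- Part D : compare with RHS
  have hexp : ((eA - g i0 : ℤ) : ℝ) ≤ -((m : ℝ) * ((n : ℝ) - k) - w * ((n : ℝ) + m) + (w : ℝ) ^ 2
          + min (2 * ((w : ℝ) - ((n : ℝ) - k) / 2)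
              * (((n : ℝ) + k) / 2 - ((w : ℝ) - ((n : ℝ) - k) / 2)))
            ((w : ℝ) * k)) := by
    have hxR : (w:ℝ) - ((n:ℝ) - k)/2 + (δ:ℝ)/2 ≤ (i0:ℝ) := by
      have h := (Rat.cast_le (K := ℝ)).2 hi0ge
      push_cast at h
      exact h
    have hd1R : 2*(w:ℝ) + k ≤ (δ:ℝ) + n := by exact_mod_cast hd1
    have hd2R : (δ:ℝ) + k ≤ (n:ℝ) := by exact_mod_cast hd2
    have hgR : ((g i0 : ℤ) : ℝ) = (i0:ℝ) * ((n:ℝ) - δ - w + (i0:ℝ)) := by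
      rw [hgdef]; push_cast; ring
    have h1 : ((w:ℝ) - ((n:ℝ)-k)/2 + (δ:ℝ)/2) * (((n:ℝ)+k)/2 - (δ:ℝ)/2)
        ≤ (i0:ℝ) * ((n:ℝ) - δ - w + (i0:ℝ)) := by
      nlinarith [mul_nonneg (sub_nonneg.2 hxR)
        (show (0:ℝ) ≤ (i0:ℝ) + ((w:ℝ) - ((n:ℝ)-k)/2 + (δ:ℝ)/2) + ((n:ℝ) - δ - w) by linarith)]
    have hmin : min (2 * ((w : ℝ) - ((n : ℝ) - k) / 2)
          * (((n : ℝ) + k) / 2 - ((w : ℝ) - ((n : ℝ) - k) / 2))) ((w : ℝ) * k)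
        ≤ ((w:ℝ) - ((n:ℝ)-k)/2 + (δ:ℝ)/2) * (((n:ℝ)+k)/2 - (δ:ℝ)/2) := by
      rcases le_total ((δ:ℝ)) (((n:ℝ)+k)/2 - ((w:ℝ) - ((n:ℝ)-k)/2)) with hc | hc
      · refine le_trans (min_le_left _ _) ?_
        nlinarith [mul_nonneg (show (0:ℝ) ≤ (δ:ℝ) - 2*((w:ℝ) - ((n:ℝ)-k)/2) by linarith)
          (show (0:ℝ) ≤ ((n:ℝ)+k) - (δ:ℝ) - 4*((w:ℝ) - ((n:ℝ)-k)/2) by linarith)]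
      · refine le_trans (min_le_right _ _) ?_
        nlinarith [mul_nonneg (show (0:ℝ) ≤ ((n:ℝ)-k) - δ by linarith)
          (show (0:ℝ) ≤ (δ:ℝ) + ((n:ℝ)-k) - 2*(((n:ℝ)+k)/2 - ((w:ℝ) - ((n:ℝ)-k)/2)) by linarith)]
    have hfin : ((eA:ℤ):ℝ) = (m:ℝ)*((k:ℝ) - n) + ((m:ℝ)+n)*(w:ℝ) - (w:ℝ)*w := by
      rw [heAdef]; push_cast; ring
    have hsplit : ((eA - g i0 : ℤ):ℝ) = ((eA:ℤ):ℝ) - ((g i0:ℤ):ℝ) := by push_cast; ring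
    rw [hsplit, hfin, hgR]
    have htr := le_trans hmin h1
    linarith [htr]
  calc (131072/2187) * (q:ℝ) ^ (eA - g i0)
      ≤ (64 * n) * (q:ℝ) ^ (eA - g i0) := by
        have hzp : (0:ℝ) < (q:ℝ) ^ (eA - g i0) := by positivity
        have hn' : (1:ℝ) ≤ (n:ℝ) := by exact_mod_cast hn0
        nlinarith
    _ ≤ 64 * n * (q : ℝ) ^ (-((m : ℝ) * ((n : ℝ) - k) - w * ((n : ℝ) + m) + (w : ℝ) ^ 2
          + min (2 * ((w : ℝ) - ((n : ℝ) - k) / 2)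
              * (((n : ℝ) + k) / 2 - ((w : ℝ) - ((n : ℝ) - k) / 2)))
            ((w : ℝ) * k))) := by
        have h64 : (0:ℝ) ≤ 64 * n := by positivity
        refine mul_le_mul_of_nonneg_left ?_ h64
        rw [← Real.rpow_intCast (q:ℝ) (eA - g i0)]
        exact Real.rpow_le_rpow_of_exponent_le hQ1 hexp
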